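/- Let t_1 ≥ t_2 ≥ ⋯ ≥ t_k ≥ 0, let N, α ∈ ℤ_{≥0} with α ≤ N, and let 1 ≤ m ≤ min(k, N). Set c = ⌊N/m⌋ ≥ 1, d = N − c·m (so 0 ≤ d < m), and define the even assignment x by x_i = c + 1 for 1 ≤ i ≤ d, x_i = c for d < i ≤ m, and x_i = 0 for m < i ≤ k. With prefix sums U_j = Σ_{i=1}^j t_i (U_0 = 0), the worst-case profit of x equals min over integers r with 0 ≤ r ≤ min(d, ⌊α/(c+1)⌋) of (U_d − U_r) + (U_m − U_{d + s(r)}), where s(r) = min(m − d, ⌊(α − r(c+1))/c⌋). -/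

import Mathlib

open Finset


/-- Shifted Heaviside function `H(n) = min(1, n)`, as a real number. -/
noncomputable def H (n : ℕ) : ℝ := min 1 (n : ℝ)

/-- The worst-case profit `g(x) = min_{δ ∈ Δ_α(x)} Σ_i t_i · H(x_i − δ_i)`. -/
noncomputable def worstProfit {k : ℕ} (t : Fin k → ℝ) (α : ℕ) (x : Fin k → ℕ) : ℝ :=
  ((Finset.Icc 0 x).filter (fun δ => ∑ i, δ i ≤ α)).inf'
    ⟨0, Finset.mem_filter.mpr ⟨Finset.mem_Icc.mpr ⟨le_rfl, fun i => Nat.zero_le _⟩, by simp⟩⟩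
    (fun δ => ∑ i, t i * H (x i - δ i))

/-- The worst-case profit of the even assignment (all `N` agents distributed as
evenly as possible among the `m` most valuable tasks, with `c = ⌊N/m⌋` and the
extra `d = N − cm` agents given to the `d` most valuable tasks) equals the
minimum over `0 ≤ r ≤ min(d, ⌊α/(c+1)⌋)` of
`(U_d − U_r) + (U_m − U_{d+s(r)})`, where `U_j` is the `j`-th prefix sum of the
profits and `s(r) = min(m − d, ⌊(α − r(c+1))/c⌋)`. -/

lemma filterIco_image {k a b : ℕ} (hbk : b ≤ k) :
    (univ.filter (fun i : Fin k => a ≤ (i:ℕ) ∧ (i:ℕ) < b)).image (Fin.val) = Finset.Ico a b := by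
  ext n
  simp only [mem_image, mem_filter, mem_univ, true_and, Finset.mem_Ico]
  constructor
  · rintro ⟨i, ⟨h1, h2⟩, rfl⟩; exact ⟨h1, h2⟩
  · rintro ⟨h1, h2⟩; exact ⟨⟨n, lt_of_lt_of_le h2 hbk⟩, ⟨h1, h2⟩, rfl⟩

lemma cardFilterIco {k a b : ℕ} (hbk : b ≤ k) :
    (univ.filter (fun i : Fin k => a ≤ (i:ℕ) ∧ (i:ℕ) < b)).card = b - a := by
  rw [← Nat.card_Ico, ← filterIco_image hbk,
    Finset.card_image_of_injective _ Fin.val_injective]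

lemma cardFilterLt {k b : ℕ} (hbk : b ≤ k) :
    (univ.filter (fun i : Fin k => (i:ℕ) < b)).card = b := by
  have : (univ.filter (fun i : Fin k => (i:ℕ) < b)) =
      (univ.filter (fun i : Fin k => 0 ≤ (i:ℕ) ∧ (i:ℕ) < b)) := by simp
  rw [this, cardFilterIco hbk]; simp

lemma splitSum {k : ℕ} (t : Fin k → ℝ) {a b : ℕ} (hab : a ≤ b) :
    ∑ i ∈ univ.filter (fun i : Fin k => (i:ℕ) < b), t i =
      (∑ i ∈ univ.filter (fun i : Fin k => (i:ℕ) < a), t i) +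
      ∑ i ∈ univ.filter (fun i : Fin k => a ≤ (i:ℕ) ∧ (i:ℕ) < b), t i := by
  rw [← Finset.sum_filter_add_sum_filter_not (univ.filter (fun i : Fin k => (i:ℕ) < b))
    (fun i => (i:ℕ) < a)]
  congr 1
  · congr 1
    rw [Finset.filter_filter]
    apply Finset.filter_congr
    intro i _
    omega
  · congr 1
    rw [Finset.filter_filter]
    apply Finset.filter_congr
    intro i _
    omega

lemma keyLemma {k : ℕ} (t : Fin k → ℝ) (ht_mono : ∀ i j : Fin k, i ≤ j → t j ≤ t i)
    (lo : ℕ) (A : Finset (Fin k)) (hlo : ∀ i ∈ A, lo ≤ (i:ℕ)) :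
    ∑ i ∈ A, t i ≤
      ∑ i ∈ univ.filter (fun i : Fin k => lo ≤ (i:ℕ) ∧ (i:ℕ) < lo + A.card), t i := by
  suffices H : ∀ (n : ℕ) (A : Finset (Fin k)), (∀ i ∈ A, lo ≤ (i:ℕ)) → A.card = n →
      ∑ i ∈ A, t i ≤
        ∑ i ∈ univ.filter (fun i : Fin k => lo ≤ (i:ℕ) ∧ (i:ℕ) < lo + n), t i by
    exact H A.card A hlo rfl
  intro n
  induction n with
  | zero =>
      intro A _ hn
      rw [Finset.card_eq_zero] at hn
      subst hn
      have : (univ.filter (fun i : Fin k => lo ≤ (i:ℕ) ∧ (i:ℕ) < lo)) = ∅ := by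
        apply Finset.filter_false_of_mem
        intro i _
        omega
      simp [this]
  | succ n ih =>
      intro A hlo hn
      have hne : A.Nonempty := by
        rw [← Finset.card_pos, hn]; omega
      set a := A.max' hne with ha
      have haA : a ∈ A := A.max'_mem hne
      have hA' : (A.erase a).card = n := by
        rw [Finset.card_erase_of_mem haA, hn]; omega
      have hbound : lo + n ≤ (a:ℕ) := by
        have hsub : A.image Fin.val ⊆ Finset.Icc lo (a:ℕ) := by
          intro v hv
          simp only [mem_image] at hv
          obtain ⟨i, hi, rfl⟩ := hv
          exact Finset.mem_Icc.mpr ⟨hlo i hi, A.le_max' i hi⟩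
        have hcard : (A.image Fin.val).card = n + 1 := by
          rw [Finset.card_image_of_injective _ Fin.val_injective, hn]
        have := Finset.card_le_card hsub
        rw [hcard, Nat.card_Icc] at this
        omega
      have hjk : lo + n < k := lt_of_le_of_lt hbound a.isLt
      set j : Fin k := ⟨lo + n, hjk⟩ with hj
      have hins : (univ.filter (fun i : Fin k => lo ≤ (i:ℕ) ∧ (i:ℕ) < lo + (n+1)))
          = insert j (univ.filter (fun i : Fin k => lo ≤ (i:ℕ) ∧ (i:ℕ) < lo + n)) := by
        ext i
        simp only [mem_insert, mem_filter, mem_univ, true_and, Fin.ext_iff, hj]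
        omega
      have hjnot : j ∉ (univ.filter (fun i : Fin k => lo ≤ (i:ℕ) ∧ (i:ℕ) < lo + n)) := by
        simp [hj]
      rw [hins, Finset.sum_insert hjnot]
      have hta : t a ≤ t j := ht_mono j a (by rw [Fin.le_def]; simpa [hj] using hbound)
      have horig : ∑ i ∈ A, t i = t a + ∑ i ∈ A.erase a, t i :=
        (Finset.add_sum_erase _ _ haA).symm
      rw [horig]
      exact add_le_add hta (ih (A.erase a) (fun i hi => hlo i (Finset.mem_of_mem_erase hi)) hA')

theorem even_assignment_worstProfit (k N α m : ℕ) (hα : α ≤ N)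
    (t : Fin k → ℝ) (ht_mono : ∀ i j : Fin k, i ≤ j → t j ≤ t i)
    (ht_nonneg : ∀ i, 0 ≤ t i)
    (hm1 : 1 ≤ m) (hmk : m ≤ k) (hmN : m ≤ N)
    (c d : ℕ) (hc : c = N / m) (hd : d = N - c * m)
    (x : Fin k → ℕ)
    (hx : ∀ i : Fin k,
      x i = if (i : ℕ) < d then c + 1 else if (i : ℕ) < m then c else 0)
    (U : ℕ → ℝ)
    (hU : ∀ j, U j = ∑ i ∈ Finset.univ.filter (fun i : Fin k => (i : ℕ) < j), t i)
    (s : ℕ → ℕ) (hs : ∀ r, s r = min (m - d) ((α - r * (c + 1)) / c)) :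
    worstProfit t α x =
      (Finset.range (min d (α / (c + 1)) + 1)).inf'
        Finset.nonempty_range_add_one
        (fun r => (U d - U r) + (U m - U (d + s r))) := by
  have hm0 : 0 < m := hm1
  have hc1 : 1 ≤ c := by
    rw [hc]; exact (Nat.one_le_div_iff hm0).mpr hmN
  have hkey : c * m + N % m = N := by
    rw [hc, Nat.mul_comm]
    exact Nat.div_add_mod N m
  have hdmod : d = N % m := by omega
  have hdm : d < m := by rw [hdmod]; exact Nat.mod_lt N hm0
  have hdk : d ≤ k := by omega
  have hx1 : ∀ i : Fin k, (i:ℕ) < d → x i = c + 1 := by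
    intro i hi; rw [hx i, if_pos hi]
  have hx2 : ∀ i : Fin k, d ≤ (i:ℕ) → (i:ℕ) < m → x i = c := by
    intro i hi1 hi2; rw [hx i, if_neg (by omega), if_pos hi2]
  have hx3 : ∀ i : Fin k, m ≤ (i:ℕ) → x i = 0 := by
    intro i hi; rw [hx i, if_neg (by omega), if_neg (by omega)]
  have hUmono : ∀ a b : ℕ, a ≤ b → U a ≤ U b := by
    intro a b hab
    rw [hU a, hU b, splitSum t hab]
    have : (0:ℝ) ≤ ∑ i ∈ univ.filter (fun i : Fin k => a ≤ (i:ℕ) ∧ (i:ℕ) < b), t i :=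
      Finset.sum_nonneg (fun i _ => ht_nonneg i)
    linarith
  have hval : ∀ δ : Fin k → ℕ, (∀ i, δ i ≤ x i) →
      (∑ i, t i * H (x i - δ i)) =
        ∑ i ∈ univ.filter (fun i : Fin k => (i:ℕ) < m ∧ δ i < x i), t i := by
    intro δ hδ
    rw [Finset.sum_filter]
    apply Finset.sum_congr rfl
    intro i _
    by_cases h : (i:ℕ) < m ∧ δ i < x i
    · rw [if_pos h]
      have h1 : 1 ≤ x i - δ i := by omega
      have hH : H (x i - δ i) = 1 := by
        unfold H
        rw [min_eq_left (by exact_mod_cast h1)]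
      rw [hH, mul_one]
    · rw [if_neg h]
      have hz : x i - δ i = 0 := by
        by_cases hi : (i:ℕ) < m
        · have := hδ i; omega
        · have := hx3 i (by omega); have := hδ i; omega
      rw [hz]
      have hH : H 0 = 0 := by unfold H; simp
      rw [hH, mul_zero]
  have hmemD : ∀ δ : Fin k → ℕ,
      δ ∈ ((Finset.Icc 0 x).filter (fun δ : Fin k → ℕ => ∑ i, δ i ≤ α)) ↔
        (∀ i, δ i ≤ x i) ∧ ∑ i, δ i ≤ α := by
    intro δ
    rw [Finset.mem_filter, Finset.mem_Icc]
    constructor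
    · rintro ⟨⟨_, h1⟩, h2⟩; exact ⟨fun i => h1 i, h2⟩
    · rintro ⟨h1, h2⟩; exact ⟨⟨fun i => Nat.zero_le _, fun i => h1 i⟩, h2⟩
  unfold worstProfit
  apply le_antisymm
  · -- LHS ≤ RHS
    apply Finset.le_inf'
    intro r hr
    rw [Finset.mem_range] at hr
    have hrd : r ≤ d := by omega
    have hrα : r * (c + 1) ≤ α := by
      have h1 : r ≤ α / (c+1) := by omega
      exact (Nat.le_div_iff_mul_le (by omega)).mp h1
    have hsr1 : s r ≤ m - d := by rw [hs]; exact min_le_left _ _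
    have hsr2 : s r * c ≤ α - r * (c+1) := by
      have h1 : s r ≤ (α - r * (c+1)) / c := by rw [hs]; exact min_le_right _ _
      exact (Nat.le_div_iff_mul_le (by omega)).mp h1
    have hdsr : d + s r ≤ m := by omega
    set δr : Fin k → ℕ := fun i =>
      if (i:ℕ) < r then c+1 else if d ≤ (i:ℕ) ∧ (i:ℕ) < d + s r then c else 0 with hδr
    have hδrx : ∀ i, δr i ≤ x i := by
      intro i
      rw [hδr]
      by_cases h1 : (i:ℕ) < r
      · simp only [if_pos h1]; rw [hx1 i (by omega)]
      · simp only [if_neg h1]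
        by_cases h2 : d ≤ (i:ℕ) ∧ (i:ℕ) < d + s r
        · simp only [if_pos h2]; rw [hx2 i h2.1 (by omega)]
        · simp only [if_neg h2]; exact Nat.zero_le _
    have hδrsum : ∑ i, δr i ≤ α := by
      have hsum : ∑ i, δr i =
          (∑ _i ∈ univ.filter (fun i : Fin k => (i:ℕ) < r), (c+1)) +
          ∑ _i ∈ univ.filter (fun i : Fin k => d ≤ (i:ℕ) ∧ (i:ℕ) < d + s r), c := by
        rw [Finset.sum_filter, Finset.sum_filter, ← Finset.sum_add_distrib]
        apply Finset.sum_congr rfl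
        intro i _
        rw [hδr]
        by_cases h1 : (i:ℕ) < r
        · simp only [if_pos h1, if_neg (show ¬(d ≤ (i:ℕ) ∧ (i:ℕ) < d + s r) by omega),
            Nat.add_zero]
        · simp only [if_neg h1, Nat.zero_add]
      rw [hsum, Finset.sum_const, Finset.sum_const,
        cardFilterLt (by omega), cardFilterIco (by omega), smul_eq_mul, smul_eq_mul]
      have hds : d + s r - d = s r := by omega
      rw [hds]
      omega
    have hδrD : δr ∈ ((Finset.Icc 0 x).filter (fun δ : Fin k → ℕ => ∑ i, δ i ≤ α)) :=
      (hmemD δr).mpr ⟨hδrx, hδrsum⟩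
    refine le_trans (Finset.inf'_le _ hδrD) (le_of_eq ?_)
    show (∑ i, t i * H (x i - δr i)) = _
    rw [hval δr hδrx]
    have hset : univ.filter (fun i : Fin k => (i:ℕ) < m ∧ δr i < x i) =
        univ.filter (fun i : Fin k => r ≤ (i:ℕ) ∧ (i:ℕ) < d) ∪
        univ.filter (fun i : Fin k => d + s r ≤ (i:ℕ) ∧ (i:ℕ) < m) := by
      rw [← Finset.filter_or]
      apply Finset.filter_congr
      intro i _
      simp only [hδr]
      constructor
      · rintro ⟨him, hlt⟩
        by_cases h1 : (i:ℕ) < r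
        · rw [if_pos h1, hx1 i (by omega)] at hlt; omega
        · rw [if_neg h1] at hlt
          by_cases h2 : d ≤ (i:ℕ) ∧ (i:ℕ) < d + s r
          · rw [if_pos h2, hx2 i h2.1 (by omega)] at hlt; omega
          · by_cases h3 : (i:ℕ) < d
            · left; omega
            · right; omega
      · rintro (⟨h1, h2⟩ | ⟨h1, h2⟩)
        · refine ⟨by omega, ?_⟩
          rw [if_neg (by omega), if_neg (by omega), hx1 i h2]; omega
        · refine ⟨h2, ?_⟩
          rw [if_neg (by omega), if_neg (by omega), hx2 i (by omega) h2]; omega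
    have hdisj : Disjoint
        (univ.filter (fun i : Fin k => r ≤ (i:ℕ) ∧ (i:ℕ) < d))
        (univ.filter (fun i : Fin k => d + s r ≤ (i:ℕ) ∧ (i:ℕ) < m)) := by
      rw [Finset.disjoint_left]
      intro i hi1 hi2
      simp only [mem_filter, mem_univ, true_and] at hi1 hi2
      omega
    rw [hset, Finset.sum_union hdisj]
    have e1 := splitSum t hrd
    have e2 := splitSum t hdsr
    rw [hU d, hU r, hU m, hU (d + s r)]
    rw [e1, e2]
    ring
  · -- RHS ≤ LHS
    apply Finset.le_inf'
    intro δ hδD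
    obtain ⟨hδx, hδα⟩ := (hmemD δ).mp hδD
    set A := univ.filter (fun i : Fin k => (i:ℕ) < d ∧ x i ≤ δ i) with hA
    set B := univ.filter (fun i : Fin k => d ≤ (i:ℕ) ∧ (i:ℕ) < m ∧ x i ≤ δ i) with hB
    set r₀ := A.card with hr₀
    set s₀ := B.card with hs₀
    have hAlo : ∀ i ∈ A, (0:ℕ) ≤ (i:ℕ) := fun i _ => Nat.zero_le _
    have hBlo : ∀ i ∈ B, d ≤ (i:ℕ) := by
      intro i hi; rw [hB] at hi; simp only [mem_filter] at hi; exact hi.2.1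
    have hr₀d : r₀ ≤ d := by
      have hsub : A ⊆ univ.filter (fun i : Fin k => (i:ℕ) < d) := by
        intro i hi; rw [hA] at hi
        simp only [mem_filter, mem_univ, true_and] at hi ⊢; exact hi.1
      calc r₀ ≤ (univ.filter (fun i : Fin k => (i:ℕ) < d)).card := Finset.card_le_card hsub
        _ = d := cardFilterLt hdk
    have hs₀md : s₀ ≤ m - d := by
      have hsub : B ⊆ univ.filter (fun i : Fin k => d ≤ (i:ℕ) ∧ (i:ℕ) < m) := by
        intro i hi; rw [hB] at hi
        simp only [mem_filter, mem_univ, true_and] at hi ⊢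
        exact ⟨hi.1, hi.2.1⟩
      calc s₀ ≤ _ := Finset.card_le_card hsub
        _ = m - d := cardFilterIco hmk
    have hABdisj : Disjoint A B := by
      rw [hA, hB, Finset.disjoint_left]
      intro i hi1 hi2
      simp only [mem_filter, mem_univ, true_and] at hi1 hi2
      omega
    have hcost : r₀ * (c+1) + s₀ * c ≤ α := by
      have h1 : r₀ * (c+1) ≤ ∑ i ∈ A, δ i := by
        calc r₀ * (c+1) = ∑ _i ∈ A, (c+1) := by rw [Finset.sum_const, smul_eq_mul]
          _ ≤ ∑ i ∈ A, δ i := by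
              apply Finset.sum_le_sum
              intro i hi
              rw [hA] at hi; simp only [mem_filter] at hi
              have := hx1 i hi.2.1; omega
      have h2 : s₀ * c ≤ ∑ i ∈ B, δ i := by
        calc s₀ * c = ∑ _i ∈ B, c := by rw [Finset.sum_const, smul_eq_mul]
          _ ≤ ∑ i ∈ B, δ i := by
              apply Finset.sum_le_sum
              intro i hi
              rw [hB] at hi; simp only [mem_filter] at hi
              have := hx2 i hi.2.1 hi.2.2.1; omega
      have h3 : (∑ i ∈ A, δ i) + ∑ i ∈ B, δ i = ∑ i ∈ A ∪ B, δ i :=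
        (Finset.sum_union hABdisj).symm
      have h4 : ∑ i ∈ A ∪ B, δ i ≤ ∑ i, δ i :=
        Finset.sum_le_sum_of_subset (Finset.subset_univ _)
      omega
    have hr₀α : r₀ * (c+1) ≤ α := by omega
    have hr₀mem : r₀ ∈ Finset.range (min d (α / (c + 1)) + 1) := by
      rw [Finset.mem_range, Nat.lt_succ_iff]
      exact le_min hr₀d ((Nat.le_div_iff_mul_le (by omega)).mpr hr₀α)
    refine le_trans (Finset.inf'_le _ hr₀mem) ?_
    show (U d - U r₀) + (U m - U (d + s r₀)) ≤ _
    have hs₀sr : s₀ ≤ s r₀ := by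
      rw [hs]
      exact le_min hs₀md ((Nat.le_div_iff_mul_le (by omega)).mpr (by omega))
    rw [hval δ hδx]
    have hsplit : univ.filter (fun i : Fin k => (i:ℕ) < m ∧ δ i < x i) =
        univ.filter (fun i : Fin k => (i:ℕ) < d ∧ δ i < x i) ∪
        univ.filter (fun i : Fin k => d ≤ (i:ℕ) ∧ (i:ℕ) < m ∧ δ i < x i) := by
      rw [← Finset.filter_or]
      apply Finset.filter_congr
      intro i _
      by_cases hP : δ i < x i
      · simp only [hP, and_true]
        omega
      · simp [hP]
    have hdisj2 : Disjoint
        (univ.filter (fun i : Fin k => (i:ℕ) < d ∧ δ i < x i))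
        (univ.filter (fun i : Fin k => d ≤ (i:ℕ) ∧ (i:ℕ) < m ∧ δ i < x i)) := by
      rw [Finset.disjoint_left]
      intro i hi1 hi2
      simp only [mem_filter, mem_univ, true_and] at hi1 hi2
      omega
    rw [hsplit, Finset.sum_union hdisj2]
    -- first block
    have ed : (∑ i ∈ A, t i) +
        (∑ i ∈ univ.filter (fun i : Fin k => (i:ℕ) < d ∧ δ i < x i), t i) = U d := by
      have h := Finset.sum_filter_add_sum_filter_not
        (univ.filter (fun i : Fin k => (i:ℕ) < d)) (fun i => x i ≤ δ i) t
      rw [Finset.filter_filter, Finset.filter_filter] at h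
      have e1 : (univ.filter fun i : Fin k => (i:ℕ) < d ∧ x i ≤ δ i) = A := hA.symm
      have e2 : (univ.filter fun i : Fin k => (i:ℕ) < d ∧ ¬ x i ≤ δ i) =
          univ.filter (fun i : Fin k => (i:ℕ) < d ∧ δ i < x i) := by
        apply Finset.filter_congr
        intro i _
        simp only [not_le]
      rw [e1, e2] at h
      rw [h, hU d]
    have em : (∑ i ∈ B, t i) +
        (∑ i ∈ univ.filter (fun i : Fin k => d ≤ (i:ℕ) ∧ (i:ℕ) < m ∧ δ i < x i), t i)
          = U m - U d := by
      have h := Finset.sum_filter_add_sum_filter_not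
        (univ.filter (fun i : Fin k => d ≤ (i:ℕ) ∧ (i:ℕ) < m)) (fun i => x i ≤ δ i) t
      rw [Finset.filter_filter, Finset.filter_filter] at h
      have e1 : (univ.filter fun i : Fin k => (d ≤ (i:ℕ) ∧ (i:ℕ) < m) ∧ x i ≤ δ i) = B := by
        rw [hB]
        apply Finset.filter_congr
        intro i _
        tauto
      have e2 : (univ.filter fun i : Fin k => (d ≤ (i:ℕ) ∧ (i:ℕ) < m) ∧ ¬ x i ≤ δ i) =
          univ.filter (fun i : Fin k => d ≤ (i:ℕ) ∧ (i:ℕ) < m ∧ δ i < x i) := by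
        apply Finset.filter_congr
        intro i _
        simp only [not_le]
        tauto
      rw [e1, e2] at h
      rw [h]
      have := splitSum t (le_of_lt hdm)
      rw [hU m, hU d, this]
      ring
    -- bounds on killed sums
    have hAbound : ∑ i ∈ A, t i ≤ U r₀ := by
      have h := keyLemma t ht_mono 0 A hAlo
      have e : (univ.filter fun i : Fin k => 0 ≤ (i:ℕ) ∧ (i:ℕ) < 0 + A.card) =
          univ.filter (fun i : Fin k => (i:ℕ) < r₀) := by
        apply Finset.filter_congr
        intro i _
        rw [← hr₀]
        omega
      rw [e] at h
      rw [hU r₀]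
      exact h
    have hBbound : ∑ i ∈ B, t i ≤ U (d + s₀) - U d := by
      have h := keyLemma t ht_mono d B hBlo
      have := splitSum t (Nat.le_add_right d s₀)
      rw [hU (d + s₀), hU d, this]
      rw [← hs₀] at h
      linarith
    have hUm2 : U (d + s₀) ≤ U (d + s r₀) := hUmono _ _ (by omega)
    linarith
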